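/- Let G be a graph of order n with χ(G) ≥ n/2 + 1 and at least one edge. Then every proper coloring of G with χ(G) colors is Edge-compelling, and hence the Edge-compelling chromatic number of G equals χ(G). -/
import Mathlib

open SimpleGraph

/-- A proper coloring of `G` with `k` colors. -/
def ProperColoring {V : Type*} {k : ℕ} (G : SimpleGraph V) (c : V → Fin k) : Prop :=
  ∀ ⦃u v : V⦄, G.Adj u v → c u ≠ c v

/-- `f` selects a rainbow committee of the coloring `c`: one vertex of each color. -/
def IsRainbow {V : Type*} {k : ℕ} (c : V → Fin k) (f : Fin k → V) : Prop :=
  ∀ i : Fin k, c (f i) = i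

/-- The coloring `c` compels property `P`: every rainbow committee has property `P`. -/
def Compels {V : Type*} {k : ℕ} (c : V → Fin k) (P : Set V → Prop) : Prop :=
  ∀ f : Fin k → V, IsRainbow c f → P (Set.range f)

/-- The `P`-compelling chromatic number of `G`: the least number of colors in a proper
coloring, using every color, in which every rainbow committee has property `P`. -/
noncomputable def compellingChromNum {V : Type*} (G : SimpleGraph V) (P : Set V → Prop) : ℕ :=
  sInf {k : ℕ | ∃ c : V → Fin k,
    ProperColoring G c ∧ Function.Surjective c ∧ Compels c P}

/-- Property `Edge`: the set contains at least one edge of `G`. -/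
def HasEdge {V : Type*} (G : SimpleGraph V) (S : Set V) : Prop :=
  ∃ u ∈ S, ∃ v ∈ S, G.Adj u v

/-- The Edge-compelling chromatic number. -/
noncomputable def edgeCompellingChromNum {V : Type*} (G : SimpleGraph V) : ℕ :=
  compellingChromNum G (HasEdge G)

/-- If `G` has order `n`, at least one edge, and chromatic number `k ≥ n/2 + 1`, then
every proper coloring of `G` with `k` colors is Edge-compelling, and the Edge-compelling
chromatic number equals `k = χ(G)`. -/
theorem edgeCompellingChromNum_eq_chromaticNumber_of_large_chromaticNumber
    {V : Type*} [Fintype V] (G : SimpleGraph V) {k : ℕ}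
    (hk : G.chromaticNumber = k) (hedge : ∃ u v : V, G.Adj u v)
    (hbig : (Fintype.card V : ℚ) / 2 + 1 ≤ (k : ℚ)) :
    (∀ c : V → Fin k, ProperColoring G c → Function.Surjective c →
      Compels c (HasEdge G)) ∧
    edgeCompellingChromNum G = k := by
  classical
  set n := Fintype.card V with hn
  have hn2 : n + 2 ≤ 2 * k := by
    have : (n : ℚ) + 2 ≤ 2 * k := by linarith
    exact_mod_cast this
  have hcol : G.Colorable k := by
    rw [← chromaticNumber_le_iff_colorable, hk]
  -- Part 1: every proper surjective k-coloring compels an edge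
  have part1 : ∀ c : V → Fin k, ProperColoring G c → Function.Surjective c →
      Compels c (HasEdge G) := by
    intro c hc hcsurj f hf
    by_contra hNoEdge
    -- range f is independent
    have hind : ∀ u ∈ Set.range f, ∀ v ∈ Set.range f, ¬ G.Adj u v := by
      intro u hu v hv hadj
      exact hNoEdge ⟨u, hu, v, hv, hadj⟩
    have hfinj : Function.Injective f := by
      intro i j hij
      rw [← hf i, ← hf j, hij]
    -- build a coloring with fewer colors
    let C : G.Coloring (Option {v : V // v ∉ Set.range f}) :=
      ⟨fun v => if h : v ∈ Set.range f then none else some ⟨v, h⟩, by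
        intro u v hadj heq
        by_cases hu : u ∈ Set.range f <;> by_cases hv : v ∈ Set.range f
        · exact hind u hu v hv hadj
        · simp [hu, hv] at heq
        · simp [hu, hv] at heq
        · simp only [hu, hv, dif_neg, not_false_iff, Option.some.injEq,
            Subtype.mk.injEq] at heq
          exact hadj.ne heq⟩
    have hcard : Fintype.card (Option {v : V // v ∉ Set.range f}) = n - k + 1 := by
      rw [Fintype.card_option]
      congr 1
      have h1 : Fintype.card {v : V // v ∉ Set.range f}
          = n - Fintype.card {v : V // v ∈ Set.range f} :=
        Fintype.card_subtype_compl _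
      have h2 : Fintype.card {v : V // v ∈ Set.range f} = k := by
        have := (Fintype.card_congr (Equiv.ofInjective f hfinj)).symm
        rwa [Fintype.card_fin] at this
      rw [h1, h2]
    have hle := C.colorable.chromaticNumber_le
    rw [hcard, hk, Nat.cast_le] at hle
    have hkn : k ≤ n := by
      simpa using Fintype.card_le_of_surjective c hcsurj
    omega
  refine ⟨part1, ?_⟩
  -- k is achieved
  have hmem : k ∈ {m : ℕ | ∃ c : V → Fin m,
      ProperColoring G c ∧ Function.Surjective c ∧ Compels c (HasEdge G)} := by
    obtain ⟨C⟩ := hcol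
    have hsurj : Function.Surjective C :=
      (le_chromaticNumber_iff_forall_surjective.mp hk.ge) C
    exact ⟨C, fun _ _ h => C.valid h, hsurj, part1 C (fun _ _ h => C.valid h) hsurj⟩
  refine le_antisymm (Nat.sInf_le hmem) (le_csInf ⟨k, hmem⟩ ?_)
  rintro m ⟨c, hc, -, -⟩
  have : G.chromaticNumber ≤ m := by
    simpa using (Coloring.mk c (fun h => hc h)).colorable.chromaticNumber_le
  rw [hk, Nat.cast_le] at this
  exact this
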